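/- Let 𝒴 ⊆ ℝ^q be a nonempty compact convex set, let g : ℝ^p × 𝒴 → ℝ be L-smooth with g(·, y) σ-strongly convex for every y (0 < σ ≤ L), and set β = 2L²/σ. Fix w ∈ 𝒴 and define the operator T(y) = P_𝒴(w + (1/β) ∇_y g(x*(y), w)), where x*(y) = argmin_{x ∈ ℝ^p} g(x, y) and P_𝒴 is Euclidean projection onto 𝒴. Then T is a (1/2)-contraction, i.e. ‖T(y₁) − T(y₂)‖ ≤ (1/2)‖y₁ − y₂‖ for all y₁, y₂ ∈ 𝒴, and consequently T has a unique fixed point in 𝒴. -/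

import Mathlib

open RealInnerProductSpace

section Aux

variable {F : Type*} [NormedAddCommGroup F] [InnerProductSpace ℝ F] [CompleteSpace F]

lemma aux_grad_zero (f : F → ℝ) (m : F) (hmin : ∀ x, f m ≤ f x) :
    gradient f m = 0 := by
  have hloc : IsLocalMin f m := Filter.Eventually.of_forall hmin
  have h0 : fderiv ℝ f m = 0 := hloc.fderiv_eq_zero
  show (InnerProductSpace.toDual ℝ F).symm (fderiv ℝ f m) = 0
  rw [h0, map_zero]

lemma aux_vi {Y : Set F} (hYconv : Convex ℝ Y) {u z : F} (hz : z ∈ Y)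
    (hmin : ∀ v ∈ Y, ‖u - z‖ ≤ ‖u - v‖) : ∀ v ∈ Y, ⟪u - z, v - z⟫ ≤ 0 := by
  have hne : Nonempty Y := ⟨⟨z, hz⟩⟩
  have heq : ‖u - z‖ = ⨅ w : Y, ‖u - w‖ := by
    refine le_antisymm (le_ciInf fun w => hmin w w.2) ?_
    have hbdd : BddBelow (Set.range fun w : Y => ‖u - ↑w‖) := by
      refine ⟨0, ?_⟩
      rintro _ ⟨w, rfl⟩
      exact norm_nonneg _
    exact ciInf_le hbdd ⟨z, hz⟩
  exact (norm_eq_iInf_iff_real_inner_le_zero hYconv hz).mp heq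

lemma aux_strong_mono (f : F → ℝ) (σ : ℝ) (hd : Differentiable ℝ f)
    (hc : ConvexOn ℝ Set.univ fun x => f x - σ / 2 * ‖x‖ ^ 2) (a b : F) :
    σ * ‖b - a‖ ^ 2 ≤ ⟪gradient f b - gradient f a, b - a⟫ := by
  set d := b - a with hd'
  have hnorm : ∀ t : ℝ, ‖t • d + a‖ ^ 2 = t ^ 2 * ‖d‖ ^ 2 + 2 * t * ⟪a, d⟫ + ‖a‖ ^ 2 := by
    intro t
    rw [norm_add_sq_real, norm_smul, real_inner_smul_left, real_inner_comm]
    simp only [Real.norm_eq_abs, mul_pow, sq_abs]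
    ring
  set ψ : ℝ → ℝ := fun t =>
    f (t • d + a) - σ / 2 * (t ^ 2 * ‖d‖ ^ 2 + 2 * t * ⟪a, d⟫ + ‖a‖ ^ 2) with hψ
  have hψc : ConvexOn ℝ Set.univ ψ := by
    have h2 := hc.comp_affineMap (AffineMap.lineMap a b : ℝ →ᵃ[ℝ] F)
    have he : ψ = (fun x => f x - σ / 2 * ‖x‖ ^ 2) ∘ (AffineMap.lineMap a b : ℝ →ᵃ[ℝ] F) := by
      funext t
      simp only [hψ, Function.comp_apply]
      rw [AffineMap.lineMap_apply_module', ← hd', hnorm t]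
    rw [he]
    simpa using h2
  have hψd : ∀ t : ℝ, HasDerivAt ψ
      (⟪gradient f (t • d + a), d⟫ - σ / 2 * (2 * t * ‖d‖ ^ 2 + 2 * ⟪a, d⟫)) t := by
    intro t
    have hc1 : HasDerivAt (fun s : ℝ => s • d + a) d t := by
      simpa using ((hasDerivAt_id t).smul_const d).add_const a
    have hf1 : HasDerivAt (fun s : ℝ => f (s • d + a)) ⟪gradient f (t • d + a), d⟫ t := by
      have hg := (hd (t • d + a)).hasGradientAt
      have := hg.hasFDerivAt.comp_hasDerivAt t hc1
      simpa [InnerProductSpace.toDual_apply_apply, Function.comp_def] using this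
    have hp : HasDerivAt
        (fun s : ℝ => σ / 2 * (s ^ 2 * ‖d‖ ^ 2 + 2 * s * ⟪a, d⟫ + ‖a‖ ^ 2))
        (σ / 2 * (2 * t * ‖d‖ ^ 2 + 2 * ⟪a, d⟫)) t := by
      have h1 : HasDerivAt (fun s : ℝ => s ^ 2 * ‖d‖ ^ 2 + 2 * s * ⟪a, d⟫ + ‖a‖ ^ 2)
          (2 * t * ‖d‖ ^ 2 + 2 * ⟪a, d⟫) t := by
        have h2 := (((hasDerivAt_pow 2 t).mul_const (‖d‖ ^ 2)).add
          (((hasDerivAt_id t).const_mul (2 : ℝ)).mul_const ⟪a, d⟫)).add_const (‖a‖ ^ 2)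
        refine h2.congr_deriv ?_
        norm_num
      exact h1.const_mul (σ / 2)
    exact hf1.sub hp
  have hmono := hψc.monotoneOn_deriv (fun x _ => (hψd x).differentiableAt)
  have h01 := hmono (Set.mem_univ (0 : ℝ)) (Set.mem_univ (1 : ℝ)) zero_le_one
  rw [(hψd 0).deriv, (hψd 1).deriv] at h01
  have e0 : (0 : ℝ) • d + a = a := by simp
  have e1 : (1 : ℝ) • d + a = b := by simp [hd']
  rw [e0, e1] at h01
  have hsub : ⟪gradient f b - gradient f a, d⟫
      = ⟪gradient f b, d⟫ - ⟪gradient f a, d⟫ := inner_sub_left _ _ _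
  linarith [h01, hsub]

end Aux

/-- contraction property of the Imp-STEP operator, Eq. (19):
with `β = 2L²/σ`, the map `T(y) = P_𝒴(w + β⁻¹ ∇_y g(x*(y), w))`, where
`x*(y) = argmin_x g(x,y)`, is a `1/2`-contraction on `𝒴` and hence has a unique
fixed point in `𝒴`. -/
theorem stmt_9 {p q : ℕ} (Y : Set (EuclideanSpace ℝ (Fin q))) (hYne : Y.Nonempty)
    (hYcomp : IsCompact Y) (hYconv : Convex ℝ Y)
    (g : EuclideanSpace ℝ (Fin p) × EuclideanSpace ℝ (Fin q) → ℝ) (L σ : ℝ)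
    (hσ : 0 < σ) (hσL : σ ≤ L)
    (hdx : ∀ y, Differentiable ℝ fun x => g (x, y))
    (hdy : ∀ x, Differentiable ℝ fun y => g (x, y))
    (hsmooth : ∀ x y x' y',
      ‖gradient (fun z => g (z, y)) x - gradient (fun z => g (z, y')) x'‖ ≤
          L * (‖x - x'‖ + ‖y - y'‖) ∧
      ‖gradient (fun z => g (x, z)) y - gradient (fun z => g (x', z)) y'‖ ≤
          L * (‖x - x'‖ + ‖y - y'‖))
    (hsc : ∀ y, ConvexOn ℝ Set.univ fun x => g (x, y) - σ / 2 * ‖x‖ ^ 2)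
    (β : ℝ) (hβ : β = 2 * L ^ 2 / σ)
    (w : EuclideanSpace ℝ (Fin q)) (hw : w ∈ Y)
    (xstar : EuclideanSpace ℝ (Fin q) → EuclideanSpace ℝ (Fin p))
    (hxstar : ∀ y x, g (xstar y, y) ≤ g (x, y))
    (T : EuclideanSpace ℝ (Fin q) → EuclideanSpace ℝ (Fin q))
    (hTmem : ∀ y, T y ∈ Y)
    (hTproj : ∀ y, ∀ v ∈ Y,
      ‖w + β⁻¹ • gradient (fun y' => g (xstar y, y')) w - T y‖ ≤
        ‖w + β⁻¹ • gradient (fun y' => g (xstar y, y')) w - v‖) :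
    (∀ y₁ ∈ Y, ∀ y₂ ∈ Y, ‖T y₁ - T y₂‖ ≤ 1 / 2 * ‖y₁ - y₂‖) ∧
    (∃! yf, yf ∈ Y ∧ T yf = yf) := by
  have hL : 0 < L := hσ.trans_le hσL
  have hβpos : 0 < β := by rw [hβ]; positivity
  set u : EuclideanSpace ℝ (Fin q) → EuclideanSpace ℝ (Fin q) :=
    fun y => w + β⁻¹ • gradient (fun y' => g (xstar y, y')) w with hu
  have hcontr : ∀ y₁ ∈ Y, ∀ y₂ ∈ Y, ‖T y₁ - T y₂‖ ≤ 1 / 2 * ‖y₁ - y₂‖ := by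
    intro y₁ hy₁ y₂ hy₂
    -- nonexpansiveness of the projection
    have h₁ := aux_vi hYconv (hTmem y₁) (hTproj y₁) (T y₂) (hTmem y₂)
    have h₂ := aux_vi hYconv (hTmem y₂) (hTproj y₂) (T y₁) (hTmem y₁)
    have hne : ‖T y₁ - T y₂‖ ≤ ‖u y₁ - u y₂‖ := by
      have key : ‖T y₁ - T y₂‖ ^ 2 ≤ ⟪u y₁ - u y₂, T y₁ - T y₂⟫ := by
        have e : ⟪u y₁ - u y₂, T y₁ - T y₂⟫
            = ⟪u y₁ - T y₁, T y₁ - T y₂⟫ + ⟪T y₁ - T y₂, T y₁ - T y₂⟫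
              + ⟪T y₂ - u y₂, T y₁ - T y₂⟫ := by
          rw [← inner_add_left, ← inner_add_left]
          congr 1
          abel
        have e1 : ⟪u y₁ - T y₁, T y₁ - T y₂⟫ = -⟪u y₁ - T y₁, T y₂ - T y₁⟫ := by
          rw [← inner_neg_right, neg_sub]
        have e2 : ⟪T y₂ - u y₂, T y₁ - T y₂⟫ = -⟪u y₂ - T y₂, T y₁ - T y₂⟫ := by
          rw [← inner_neg_left, neg_sub]
        have e3 : ⟪T y₁ - T y₂, T y₁ - T y₂⟫ = ‖T y₁ - T y₂‖ ^ 2 :=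
          real_inner_self_eq_norm_sq _
        rw [e, e1, e2, e3]
        linarith [h₁, h₂]
      have hbound := real_inner_le_norm (u y₁ - u y₂) (T y₁ - T y₂)
      rcases eq_or_lt_of_le (norm_nonneg (T y₁ - T y₂)) with h0 | h0
      · rw [← h0]; positivity
      · nlinarith [key, hbound]
    -- bound on ‖u y₁ - u y₂‖
    have hG := (hsmooth (xstar y₁) w (xstar y₂) w).2
    have hG' : ‖gradient (fun y' => g (xstar y₁, y')) w
        - gradient (fun y' => g (xstar y₂, y')) w‖ ≤ L * ‖xstar y₁ - xstar y₂‖ := by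
      simpa using hG
    have huu : ‖u y₁ - u y₂‖ = β⁻¹ * ‖gradient (fun y' => g (xstar y₁, y')) w
        - gradient (fun y' => g (xstar y₂, y')) w‖ := by
      have : u y₁ - u y₂ = β⁻¹ • (gradient (fun y' => g (xstar y₁, y')) w
          - gradient (fun y' => g (xstar y₂, y')) w) := by
        rw [hu]
        simp [smul_sub]
      rw [this, norm_smul, Real.norm_eq_abs, abs_of_pos (inv_pos.mpr hβpos)]
    -- bound on ‖xstar y₁ - xstar y₂‖ via strong convexity
    have hx : σ * ‖xstar y₁ - xstar y₂‖ ≤ L * ‖y₁ - y₂‖ := by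
      have h0₁ : gradient (fun x => g (x, y₁)) (xstar y₁) = 0 :=
        aux_grad_zero _ _ (hxstar y₁)
      have h0₂ : gradient (fun x => g (x, y₂)) (xstar y₂) = 0 :=
        aux_grad_zero _ _ (hxstar y₂)
      have hm := aux_strong_mono (fun x => g (x, y₁)) σ (hdx y₁) (hsc y₁)
        (xstar y₂) (xstar y₁)
      rw [h0₁] at hm
      have e4 : ⟪(0 : EuclideanSpace ℝ (Fin p)) - gradient (fun x => g (x, y₁)) (xstar y₂),
          xstar y₁ - xstar y₂⟫
          = ⟪gradient (fun x => g (x, y₂)) (xstar y₂)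
            - gradient (fun x => g (x, y₁)) (xstar y₂), xstar y₁ - xstar y₂⟫ := by
        rw [h0₂]
      rw [e4] at hm
      have hbd := real_inner_le_norm (gradient (fun x => g (x, y₂)) (xstar y₂)
          - gradient (fun x => g (x, y₁)) (xstar y₂)) (xstar y₁ - xstar y₂)
      have hsm := (hsmooth (xstar y₂) y₂ (xstar y₂) y₁).1
      have hsm' : ‖gradient (fun x => g (x, y₂)) (xstar y₂)
          - gradient (fun x => g (x, y₁)) (xstar y₂)‖ ≤ L * ‖y₁ - y₂‖ := by
        rw [norm_sub_rev y₁ y₂]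
        simpa using hsm
      rcases eq_or_lt_of_le (norm_nonneg (xstar y₁ - xstar y₂)) with h0 | h0
      · rw [← h0, mul_zero]
        positivity
      · have : σ * ‖xstar y₁ - xstar y₂‖ ^ 2 ≤ L * ‖y₁ - y₂‖ * ‖xstar y₁ - xstar y₂‖ := by
          calc σ * ‖xstar y₁ - xstar y₂‖ ^ 2 ≤ _ := hm
            _ ≤ ‖gradient (fun x => g (x, y₂)) (xstar y₂)
                - gradient (fun x => g (x, y₁)) (xstar y₂)‖ * ‖xstar y₁ - xstar y₂‖ := hbd
            _ ≤ L * ‖y₁ - y₂‖ * ‖xstar y₁ - xstar y₂‖ := by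
                exact mul_le_mul_of_nonneg_right hsm' (norm_nonneg _)
        nlinarith
    -- combine
    have hxs : ‖xstar y₁ - xstar y₂‖ ≤ L / σ * ‖y₁ - y₂‖ := by
      rw [div_mul_eq_mul_div, le_div_iff₀ hσ]
      linarith [hx]
    calc ‖T y₁ - T y₂‖ ≤ ‖u y₁ - u y₂‖ := hne
      _ = β⁻¹ * ‖gradient (fun y' => g (xstar y₁, y')) w
          - gradient (fun y' => g (xstar y₂, y')) w‖ := huu
      _ ≤ β⁻¹ * (L * ‖xstar y₁ - xstar y₂‖) := by
          exact mul_le_mul_of_nonneg_left hG' (inv_nonneg.mpr hβpos.le)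
      _ ≤ β⁻¹ * (L * (L / σ * ‖y₁ - y₂‖)) := by
          have := mul_le_mul_of_nonneg_left hxs hL.le
          exact mul_le_mul_of_nonneg_left this (inv_nonneg.mpr hβpos.le)
      _ = 1 / 2 * ‖y₁ - y₂‖ := by
          rw [hβ]
          field_simp
  refine ⟨hcontr, ?_⟩
  -- unique fixed point via Banach
  haveI : Nonempty Y := hYne.to_subtype
  haveI : CompactSpace Y := isCompact_iff_compactSpace.mp hYcomp
  haveI : CompleteSpace Y := complete_of_compact
  set T' : Y → Y := fun a => ⟨T a, hTmem a⟩ with hT'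
  have hlip : LipschitzWith (1 / 2 : NNReal) T' := by
    apply LipschitzWith.of_dist_le_mul
    intro a b
    have := hcontr a a.2 b b.2
    simp only [Subtype.dist_eq, dist_eq_norm, hT']
    push_cast
    simpa using this
  have hC : ContractingWith (1 / 2 : NNReal) T' := ⟨by rw [← NNReal.coe_lt_coe]; norm_num, hlip⟩
  obtain ⟨yf, hyf⟩ := hC.exists_fixedPoint (Classical.arbitrary Y) (edist_ne_top _ _)
  refine ⟨(yf : EuclideanSpace ℝ (Fin q)), ⟨yf.2, ?_⟩, ?_⟩
  · exact congrArg Subtype.val hyf.1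
  · rintro y' ⟨hy'Y, hy'fix⟩
    have hfix' : Function.IsFixedPt T' ⟨y', hy'Y⟩ := Subtype.ext hy'fix
    exact congrArg Subtype.val (hC.fixedPoint_unique' hfix' hyf.1)
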